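/- Let S₀ be a convex subset of a real vector space, and let f : S₀ → ℝ satisfy: for all ρ, σ ∈ S₀ and p ∈ [0,1], f(pρ + (1−p)σ) ≥ p f(ρ) + (1−p) f(σ) − a(p) and f(pρ + (1−p)σ) ≤ p f(ρ) + (1−p) f(σ) + b(p), where a, b : [0,1] → [0,∞) vanish at 0 and are nondecreasing on [0, 1/2]. Suppose ρ, σ, τ₊, τ₋, ω ∈ S₀ satisfy ω = (1/(1+ε))ρ + (ε/(1+ε))τ₋ = (1/(1+ε))σ + (ε/(1+ε))τ₊ for some ε ∈ (0,1]. Then with p = ε/(1+ε), one has |f(ρ) − f(σ)| ≤ (p/(1−p))·|f(τ₊) − f(τ₋)| + (a(p)+b(p))/(1−p). -/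

import Mathlib

/-- Core step of the Alicki–Fannes–Winter method: if `f` satisfies the LAA inequalities on a
convex set `S₀` and `ω = (1/(1+ε))ρ + (ε/(1+ε))τ₋ = (1/(1+ε))σ + (ε/(1+ε))τ₊`, then with
`p = ε/(1+ε)` one has
`|f ρ − f σ| ≤ (p/(1−p))·|f τ₊ − f τ₋| + (a p + b p)/(1−p)`. -/
theorem stmt_3 {V : Type*} [AddCommGroup V] [Module ℝ V]
    (S₀ : Set V) (hconv : Convex ℝ S₀)
    (f : V → ℝ) (a b : ℝ → ℝ)
    (ha0 : a 0 = 0) (hb0 : b 0 = 0)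
    (hapos : ∀ p ∈ Set.Icc (0 : ℝ) 1, 0 ≤ a p)
    (hbpos : ∀ p ∈ Set.Icc (0 : ℝ) 1, 0 ≤ b p)
    (hamono : MonotoneOn a (Set.Icc 0 (1 / 2)))
    (hbmono : MonotoneOn b (Set.Icc 0 (1 / 2)))
    (hLAA1 : ∀ ρ ∈ S₀, ∀ σ ∈ S₀, ∀ p ∈ Set.Icc (0 : ℝ) 1,
      p * f ρ + (1 - p) * f σ - a p ≤ f (p • ρ + (1 - p) • σ))
    (hLAA2 : ∀ ρ ∈ S₀, ∀ σ ∈ S₀, ∀ p ∈ Set.Icc (0 : ℝ) 1,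
      f (p • ρ + (1 - p) • σ) ≤ p * f ρ + (1 - p) * f σ + b p)
    (ρ σ τp τm ω : V)
    (hρ : ρ ∈ S₀) (hσ : σ ∈ S₀) (hτp : τp ∈ S₀) (hτm : τm ∈ S₀) (hω : ω ∈ S₀)
    (ε : ℝ) (hε : ε ∈ Set.Ioc (0 : ℝ) 1)
    (hdec1 : ω = (1 / (1 + ε)) • ρ + (ε / (1 + ε)) • τm)
    (hdec2 : ω = (1 / (1 + ε)) • σ + (ε / (1 + ε)) • τp) :
    |f ρ - f σ| ≤
      (ε / (1 + ε)) / (1 - ε / (1 + ε)) * |f τp - f τm| +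
        (a (ε / (1 + ε)) + b (ε / (1 + ε))) / (1 - ε / (1 + ε)) := by
  obtain ⟨hε0, hε1⟩ := hε
  have h1ε : (0:ℝ) < 1 + ε := by linarith
  set p : ℝ := ε / (1 + ε) with hp
  have hpc : 1 - p = 1 / (1 + ε) := by rw [hp]; field_simp; ring
  have hp0 : 0 < p := div_pos hε0 h1ε
  have hp1 : p < 1 := by rw [div_lt_one h1ε]; linarith
  have hpmem : p ∈ Set.Icc (0:ℝ) 1 := ⟨le_of_lt hp0, le_of_lt hp1⟩
  have h1p : 0 < 1 - p := by linarith
  have hωm : ω = p • τm + (1 - p) • ρ := by rw [hdec1, hpc, add_comm]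
  have hωp : ω = p • τp + (1 - p) • σ := by rw [hdec2, hpc, add_comm]
  have hL1 := hLAA1 τm hτm ρ hρ p hpmem
  have hL2 := hLAA2 τm hτm ρ hρ p hpmem
  have hL3 := hLAA1 τp hτp σ hσ p hpmem
  have hL4 := hLAA2 τp hτp σ hσ p hpmem
  rw [← hωm] at hL1 hL2
  rw [← hωp] at hL3 hL4
  have key : (1 - p) * |f ρ - f σ| ≤ p * |f τp - f τm| + (a p + b p) := by
    rcases abs_cases (f ρ - f σ) with ⟨heq, _⟩ | ⟨heq, _⟩ <;> rw [heq] <;>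
      nlinarith [le_abs_self (f τp - f τm), neg_abs_le (f τp - f τm), hp0.le]
  rw [div_mul_eq_mul_div, ← add_div, le_div_iff₀ h1p]
  linarith [key]
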